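/- arXiv:1412.1062 — 6 statements merged into one kernel-verified Lean document; each statement's English description precedes it below -/
import Mathlib

section
/- Let n ≥ 1, let B be a continuous map from ℝⁿ to the space of continuous bilinear forms on ℝⁿ, and let f : ℝⁿ → ℝ be a C² function satisfying the Hessian equation D²f(x)(v,w) = f(x)·B(x)(v,w) for all x ∈ ℝⁿ and all v, w ∈ ℝⁿ. If there exists a point p ∈ ℝⁿ with f(p) = 0 and Df(p) = 0, then f is identically zero on ℝⁿ. -/
/-- Euclidean version of Lemma 2.1(i): a C² solution of the Hessian equation
`D²f(x)(v,w) = f(x)·B(x)(v,w)` with continuous bilinear-form coefficient `B`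
that vanishes to first order at a point vanishes identically. -/
theorem stmt_1 (n : ℕ) (hn : 1 ≤ n)
    (B : EuclideanSpace ℝ (Fin n) →
      EuclideanSpace ℝ (Fin n) →L[ℝ] EuclideanSpace ℝ (Fin n) →L[ℝ] ℝ)
    (hB : Continuous B)
    (f : EuclideanSpace ℝ (Fin n) → ℝ) (hf : ContDiff ℝ 2 f)
    (heq : ∀ (x v w : EuclideanSpace ℝ (Fin n)),
      fderiv ℝ (fderiv ℝ f) x v w = f x * B x v w)
    (p : EuclideanSpace ℝ (Fin n)) (hp0 : f p = 0) (hp1 : fderiv ℝ f p = 0) :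
    ∀ x, f x = 0 := by
  intro x
  set v : EuclideanSpace ℝ (Fin n) := x - p with hv
  set γ : ℝ → EuclideanSpace ℝ (Fin n) := fun t => p + t • v with hγ
  have hγd : ∀ t : ℝ, HasDerivAt γ v t := by
    intro t
    simpa [hγ] using ((hasDerivAt_id t).smul_const v).const_add p
  have hγc : Continuous γ := by
    continuity
  have hf1 : ContDiff ℝ 1 (fderiv ℝ f) := by
    have := hf.fderiv_right (m := 1) (by norm_num)
    exact this
  have hfd : ∀ y, HasFDerivAt f (fderiv ℝ f y) y := fun y =>
    ((hf.differentiable (by norm_num)) y).hasFDerivAt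
  have hFd : ∀ y, HasFDerivAt (fderiv ℝ f) (fderiv ℝ (fderiv ℝ f) y) y := fun y =>
    ((hf1.differentiable (by norm_num)) y).hasFDerivAt
  set g : ℝ → ℝ := fun t => f (γ t) with hgdef
  set g' : ℝ → ℝ := fun t => fderiv ℝ f (γ t) v with hg'def
  set c : ℝ → ℝ := fun t => B (γ t) v v with hcdef
  have hg : ∀ t, HasDerivAt g (g' t) t := fun t =>
    (hfd (γ t)).comp_hasDerivAt t (hγd t)
  have hg' : ∀ t, HasDerivAt g' (g t * c t) t := by
    intro t
    have h1 : HasDerivAt (fun t => fderiv ℝ f (γ t)) (fderiv ℝ (fderiv ℝ f) (γ t) v) t :=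
      (hFd (γ t)).comp_hasDerivAt t (hγd t)
    have h2 := (ContinuousLinearMap.apply ℝ ℝ v).hasFDerivAt.comp_hasDerivAt t h1
    simp only [ContinuousLinearMap.apply_apply, heq] at h2
    exact h2
  have hc : Continuous c := by
    exact ((hB.comp hγc).clm_apply continuous_const).clm_apply continuous_const
  obtain ⟨C, hC⟩ := (isCompact_Icc : IsCompact (Set.Icc (0:ℝ) 1)).exists_bound_of_continuousOn
    hc.continuousOn
  have hC0 : 0 ≤ C := le_trans (norm_nonneg _) (hC 0 (by norm_num))
  set K : ℝ := max 1 C with hK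
  set y : ℝ → ℝ × ℝ := fun t => (g t, g' t) with hy
  have hyd : ∀ t, HasDerivAt y (g' t, g t * c t) t := fun t => (hg t).prodMk (hg' t)
  have hycont : Continuous y := by
    exact (continuous_iff_continuousAt.2 fun t => (hyd t).continuousAt)
  have key : ∀ t ∈ Set.Icc (0:ℝ) 1, ‖y t‖ ≤ gronwallBound 0 K 0 (t - 0) := by
    apply norm_le_gronwallBound_of_norm_deriv_right_le (f' := fun t => (g' t, g t * c t))
      hycont.continuousOn (fun t _ => (hyd t).hasDerivWithinAt)
    · have : y 0 = (0, 0) := by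
        have hγ0 : γ 0 = p := by simp [hγ]
        simp [hy, hgdef, hg'def, hγ0, hp0, hp1]
      simp [this, Prod.norm_def]
    · intro t ht
      have h1 : ‖g' t‖ ≤ ‖y t‖ := by
        simp only [hy, Prod.norm_def]
        exact le_max_right _ _
      have h2 : ‖g t * c t‖ ≤ C * ‖y t‖ := by
        rw [norm_mul]
        calc ‖g t‖ * ‖c t‖ ≤ ‖y t‖ * C := by
              apply mul_le_mul ?_ (hC t (Set.Ico_subset_Icc_self ht)) (norm_nonneg _)
                (norm_nonneg _)
              simp only [hy, Prod.norm_def]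
              exact le_max_left _ _
          _ = C * ‖y t‖ := mul_comm _ _
      have hKy : ‖y t‖ ≤ K * ‖y t‖ :=
        le_mul_of_one_le_left (norm_nonneg _) (le_max_left 1 C)
      have hCy : C * ‖y t‖ ≤ K * ‖y t‖ :=
        mul_le_mul_of_nonneg_right (le_max_right 1 C) (norm_nonneg _)
      have : ‖(g' t, g t * c t)‖ ≤ K * ‖y t‖ := by
        rw [Prod.norm_def]
        exact max_le (h1.trans hKy) (h2.trans hCy)
      simpa using this
  have h1 := key 1 (by norm_num)
  rw [gronwallBound_ε0] at h1
  simp only [zero_mul] at h1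
  have hy1 : ‖y 1‖ = 0 := le_antisymm h1 (norm_nonneg _)
  have hg1 : g 1 = 0 := by
    have : |g 1| ≤ ‖y 1‖ := by
      simp only [hy, Prod.norm_def, Real.norm_eq_abs]
      exact le_max_left _ _
    rw [hy1] at this
    exact abs_nonpos_iff.mp this
  have : γ 1 = x := by simp [hγ, hv]
  rw [hgdef] at hg1
  simpa [this] using hg1
end

section
/- Let n ≥ 1, let B be a continuous map from ℝⁿ to the space of continuous bilinear forms on ℝⁿ, and let f : ℝⁿ → ℝ be a C² function satisfying D²f(x)(v,w) = f(x)·B(x)(v,w) for all x ∈ ℝⁿ and all v, w ∈ ℝⁿ. If f is not identically zero, then the gradient ∇f(p) is nonzero at every point p with f(p) = 0; in particular 0 is a regular value of f and the zero set f⁻¹(0) contains no critical point of f. -/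
/-- Euclidean version of Lemma 2.1(i): for a nontrivial C² solution of the Hessian
equation `D²f(x)(v,w) = f(x)·B(x)(v,w)`, the gradient of `f` is nonzero at every
zero of `f`, i.e. `0` is a regular value of `f`. -/
theorem stmt_2 (n : ℕ) (hn : 1 ≤ n)
    (B : EuclideanSpace ℝ (Fin n) →
      EuclideanSpace ℝ (Fin n) →L[ℝ] EuclideanSpace ℝ (Fin n) →L[ℝ] ℝ)
    (hB : Continuous B)
    (f : EuclideanSpace ℝ (Fin n) → ℝ) (hf : ContDiff ℝ 2 f)
    (heq : ∀ (x v w : EuclideanSpace ℝ (Fin n)),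
      fderiv ℝ (fderiv ℝ f) x v w = f x * B x v w)
    (hne : ∃ x, f x ≠ 0) :
    ∀ p : EuclideanSpace ℝ (Fin n), f p = 0 → gradient f p ≠ 0 := by
  intro p hp0 hgrad
  obtain ⟨x, hx⟩ := hne
  apply hx
  set v : EuclideanSpace ℝ (Fin n) := x - p with hv
  have hfd : Differentiable ℝ f := hf.differentiable (by norm_num)
  have h1 : ContDiff ℝ 1 (fderiv ℝ f) := hf.fderiv_right (by norm_num)
  have hfd2 : Differentiable ℝ (fderiv ℝ f) := h1.differentiable (by norm_num)
  have hfp : fderiv ℝ f p = 0 := by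
    have h := hgrad
    rw [gradient] at h
    exact (LinearIsometryEquiv.map_eq_zero_iff _).mp h
  set c : ℝ → EuclideanSpace ℝ (Fin n) := fun t => p + t • v with hc
  have hcc : Continuous c := by continuity
  have hc0 : c 0 = p := by simp [hc]
  have hc1 : c 1 = x := by simp [hc, hv]
  have hcd : ∀ t : ℝ, HasDerivAt c v t := fun t => by
    simpa only [id, one_smul] using (((hasDerivAt_id t).smul_const v).const_add p)
  have hg : ∀ t : ℝ, HasDerivAt (fun t => f (c t)) (fderiv ℝ f (c t) v) t := fun t =>
    (hfd (c t)).hasFDerivAt.comp_hasDerivAt t (hcd t)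
  have hg1 : ∀ t : ℝ, HasDerivAt (fun t => fderiv ℝ f (c t) v)
      (f (c t) * B (c t) v v) t := fun t => by
    have hD : HasDerivAt (fun t => fderiv ℝ f (c t))
        (fderiv ℝ (fderiv ℝ f) (c t) v) t :=
      (hfd2 (c t)).hasFDerivAt.comp_hasDerivAt t (hcd t)
    have h := hD.clm_apply (hasDerivAt_const t v)
    simpa [heq] using h
  set y : ℝ → ℝ × ℝ := fun t => (f (c t), fderiv ℝ f (c t) v) with hy
  have hyd : ∀ t : ℝ, HasDerivAt y (fderiv ℝ f (c t) v, f (c t) * B (c t) v v) t :=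
    fun t => (hg t).prodMk (hg1 t)
  -- bound for the coefficient on [0,1]
  have hbcont : Continuous fun t : ℝ => B (c t) v v :=
    ((hB.comp hcc).clm_apply continuous_const).clm_apply continuous_const
  obtain ⟨C, hC⟩ := (isCompact_Icc (a := (0:ℝ)) (b := 1)).exists_bound_of_continuousOn
    hbcont.continuousOn
  set K : ℝ := max C 0 + 1 with hK
  have hK1 : (1:ℝ) ≤ K := by have := le_max_right C (0:ℝ); linarith
  have key : ∀ t ∈ Set.Icc (0:ℝ) 1, ‖y t‖ ≤ gronwallBound 0 K 0 (t - 0) := by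
    apply norm_le_gronwallBound_of_norm_deriv_right_le
    · exact fun t _ => ((hyd t).continuousAt).continuousWithinAt
    · exact fun t _ => (hyd t).hasDerivWithinAt
    · simp [hy, hc0, hp0, hfp]
    · intro t ht
      have hb : ‖B (c t) v v‖ ≤ C := hC t (Set.Ico_subset_Icc_self ht)
      have hbK : ‖B (c t) v v‖ ≤ K := le_trans hb (by simp [hK]; linarith [le_max_left C (0:ℝ), le_max_right C (0:ℝ)])
      rw [Prod.norm_def, Prod.norm_def]
      simp only [add_zero]
      apply max_le
      · calc ‖fderiv ℝ f (c t) v‖ ≤ max ‖f (c t)‖ ‖fderiv ℝ f (c t) v‖ := le_max_right _ _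
          _ ≤ K * max ‖f (c t)‖ ‖fderiv ℝ f (c t) v‖ := by
              nlinarith [le_max_left ‖f (c t)‖ ‖fderiv ℝ f (c t) v‖, norm_nonneg (f (c t)),
                le_max_right ‖f (c t)‖ ‖fderiv ℝ f (c t) v‖, norm_nonneg (fderiv ℝ f (c t) v)]
      · calc ‖f (c t) * B (c t) v v‖ = ‖f (c t)‖ * ‖B (c t) v v‖ := norm_mul _ _
          _ ≤ ‖f (c t)‖ * K := by
              exact mul_le_mul_of_nonneg_left hbK (norm_nonneg _)
          _ ≤ K * max ‖f (c t)‖ ‖fderiv ℝ f (c t) v‖ := by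
              rw [mul_comm]
              exact mul_le_mul_of_nonneg_left (le_max_left _ _) (by linarith)
  have h1' := key 1 (by norm_num)
  rw [gronwallBound_ε0] at h1'
  simp only [zero_mul] at h1'
  have : ‖y 1‖ = 0 := le_antisymm h1' (norm_nonneg _)
  have hy1 : y 1 = 0 := norm_eq_zero.mp this
  have : f (c 1) = 0 := congrArg Prod.fst hy1
  rwa [hc1] at this
end

section
/- Let n ≥ 1, let B be a continuous map from ℝⁿ to the space of continuous bilinear forms on ℝⁿ, and let f : ℝⁿ → ℝ be a C² function satisfying D²f(x)(v,w) = f(x)·B(x)(v,w) for all x ∈ ℝⁿ and all v, w ∈ ℝⁿ. Then for every differentiable curve c : [0,1] → ℝⁿ with f(c(t)) = 0 for all t ∈ [0,1], the function t ↦ |∇f(c(t))|² is constant on [0,1]. -/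
/-- Euclidean version of Lemma 2.1(i): for a C² solution of the Hessian equation
`D²f(x)(v,w) = f(x)·B(x)(v,w)`, the quantity `|∇f|²` is constant along any
differentiable curve contained in the zero set of `f`. -/
theorem stmt_3 (n : ℕ) (hn : 1 ≤ n)
    (B : EuclideanSpace ℝ (Fin n) →
      EuclideanSpace ℝ (Fin n) →L[ℝ] EuclideanSpace ℝ (Fin n) →L[ℝ] ℝ)
    (hB : Continuous B)
    (f : EuclideanSpace ℝ (Fin n) → ℝ) (hf : ContDiff ℝ 2 f)
    (heq : ∀ (x v w : EuclideanSpace ℝ (Fin n)),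
      fderiv ℝ (fderiv ℝ f) x v w = f x * B x v w) :
    ∀ c : ℝ → EuclideanSpace ℝ (Fin n),
      (∀ t ∈ Set.Icc (0:ℝ) 1, DifferentiableAt ℝ c t) →
      (∀ t ∈ Set.Icc (0:ℝ) 1, f (c t) = 0) →
      ∀ s ∈ Set.Icc (0:ℝ) 1, ∀ t ∈ Set.Icc (0:ℝ) 1,
        ‖gradient f (c s)‖ ^ 2 = ‖gradient f (c t)‖ ^ 2 := by
  intro c hc hc0 s hs t ht
  have hfd : Differentiable ℝ (fderiv ℝ f) :=
    (hf.fderiv_right (m := 1) (by norm_num)).differentiable (by norm_num)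
  have key : ∀ x, f x = 0 → fderiv ℝ (fderiv ℝ f) x = 0 := by
    intro x hx
    ext v w
    simpa [hx] using heq x v w
  set h : ℝ → (EuclideanSpace ℝ (Fin n) →L[ℝ] ℝ) := fun a => fderiv ℝ f (c a) with hh
  have hdiff : ∀ a ∈ Set.Icc (0:ℝ) 1, DifferentiableAt ℝ h a := fun a ha =>
    (hfd (c a)).comp a (hc a ha)
  have hUD : UniqueDiffOn ℝ (Set.Icc (0:ℝ) 1) := uniqueDiffOn_Icc (by norm_num)
  have hzero : ∀ a ∈ Set.Icc (0:ℝ) 1,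
      fderivWithin ℝ h (Set.Icc (0:ℝ) 1) a = 0 := by
    intro a ha
    rw [(hdiff a ha).fderivWithin (hUD a ha)]
    have : fderiv ℝ h a = (fderiv ℝ (fderiv ℝ f) (c a)).comp (fderiv ℝ c a) :=
      fderiv_comp a (hfd (c a)) (hc a ha)
    rw [this, key (c a) (hc0 a ha)]
    ext v
    simp
  have hconst : h s = h t :=
    (convex_Icc (0:ℝ) 1).is_const_of_fderivWithin_eq_zero
      (fun a ha => (hdiff a ha).differentiableWithinAt) hzero hs ht
  have : gradient f (c s) = gradient f (c t) := by
    simp only [gradient]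
    exact congrArg _ hconst
  rw [this]
end

section
/- Let Λ > 0, d > 0, and let φ : [0,d] → ℝ be a function with φ(t) > 0 for all t ∈ [0,d] which is Lipschitz with constant Λ, i.e. |φ(s) − φ(t)| ≤ Λ|s − t| for all s, t ∈ [0,d]. Then ∫₀^d φ(t)⁻¹ dt ≥ Λ⁻¹ · ln(1 + Λ d / φ(0)). -/
/-- Analytic core of Lemma 3.2: a positive `Λ`-Lipschitz function `φ` on `[0,d]`
satisfies `∫₀^d φ⁻¹ ≥ Λ⁻¹ · log(1 + Λd/φ(0))`. -/
theorem stmt_4 (Λ d : ℝ) (hΛ : 0 < Λ) (hd : 0 < d) (φ : ℝ → ℝ)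
    (hpos : ∀ t ∈ Set.Icc (0:ℝ) d, 0 < φ t)
    (hlip : ∀ s ∈ Set.Icc (0:ℝ) d, ∀ t ∈ Set.Icc (0:ℝ) d,
      |φ s - φ t| ≤ Λ * |s - t|) :
    Λ⁻¹ * Real.log (1 + Λ * d / φ 0) ≤ ∫ t in (0:ℝ)..d, (φ t)⁻¹ := by
  have h0 : (0:ℝ) ∈ Set.Icc (0:ℝ) d := ⟨le_refl _, hd.le⟩
  have hφ0 : 0 < φ 0 := hpos 0 h0
  -- continuity of φ on Icc
  have hcont : ContinuousOn φ (Set.Icc 0 d) := by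
    have : LipschitzOnWith ⟨Λ, hΛ.le⟩ φ (Set.Icc 0 d) := by
      apply LipschitzOnWith.of_dist_le_mul
      intro x hx y hy
      rw [Real.dist_eq, Real.dist_eq]
      exact hlip x hx y hy
    exact this.continuousOn
  have hcontinv : ContinuousOn (fun t => (φ t)⁻¹) (Set.Icc 0 d) :=
    hcont.inv₀ (fun t ht => (hpos t ht).ne')
  have huIcc : Set.uIcc (0:ℝ) d = Set.Icc 0 d := Set.uIcc_of_le hd.le
  have hint1 : IntervalIntegrable (fun t => (φ t)⁻¹) MeasureTheory.volume 0 d :=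
    (huIcc ▸ hcontinv).intervalIntegrable
  have hpos2 : ∀ t ∈ Set.Icc (0:ℝ) d, 0 < φ 0 + Λ * t := fun t ht =>
    add_pos_of_pos_of_nonneg hφ0 (mul_nonneg hΛ.le ht.1)
  have hcont2 : ContinuousOn (fun t => (φ 0 + Λ * t)⁻¹) (Set.Icc 0 d) := by
    apply ContinuousOn.inv₀
    · fun_prop
    · exact fun t ht => (hpos2 t ht).ne'
  have hint2 : IntervalIntegrable (fun t => (φ 0 + Λ * t)⁻¹) MeasureTheory.volume 0 d :=
    (huIcc ▸ hcont2).intervalIntegrable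
  -- pointwise comparison
  have hmono : ∀ t ∈ Set.Icc (0:ℝ) d, (φ 0 + Λ * t)⁻¹ ≤ (φ t)⁻¹ := by
    intro t ht
    apply inv_anti₀ (hpos t ht)
    have := hlip t ht 0 h0
    rw [abs_sub_comm] at this
    have h1 : φ t - φ 0 ≤ |φ 0 - φ t| := by
      rw [abs_sub_comm]; exact le_abs_self _
    have h2 : |t - 0| = t := by rw [sub_zero, abs_of_nonneg ht.1]
    nlinarith [h1, this]
  have hle : (∫ t in (0:ℝ)..d, (φ 0 + Λ * t)⁻¹) ≤ ∫ t in (0:ℝ)..d, (φ t)⁻¹ :=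
    intervalIntegral.integral_mono_on hd.le hint2 hint1 hmono
  -- compute the model integral via an antiderivative
  have hderiv : ∀ t ∈ Set.uIcc (0:ℝ) d,
      HasDerivAt (fun t => Λ⁻¹ * Real.log (φ 0 + Λ * t)) ((φ 0 + Λ * t)⁻¹) t := by
    intro t ht
    rw [huIcc] at ht
    have hne := (hpos2 t ht).ne'
    have h1 : HasDerivAt (fun t => φ 0 + Λ * t) Λ t := by
      simpa using ((hasDerivAt_id t).const_mul Λ).const_add (φ 0)
    have h2 := (h1.log hne).const_mul Λ⁻¹
    rw [mul_div_assoc', inv_mul_cancel₀ hΛ.ne', one_div] at h2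
    exact h2
  have hcalc : (∫ t in (0:ℝ)..d, (φ 0 + Λ * t)⁻¹)
      = Λ⁻¹ * Real.log (φ 0 + Λ * d) - Λ⁻¹ * Real.log (φ 0 + Λ * 0) := by
    exact intervalIntegral.integral_eq_sub_of_hasDerivAt hderiv hint2
  have hlogeq : Λ⁻¹ * Real.log (1 + Λ * d / φ 0)
      = Λ⁻¹ * Real.log (φ 0 + Λ * d) - Λ⁻¹ * Real.log (φ 0 + Λ * 0) := by
    rw [mul_zero, add_zero, ← mul_sub, ← Real.log_div (by positivity) hφ0.ne']
    congr 2
    field_simp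
  rw [hlogeq, ← hcalc]
  exact hle
end

section
/- Let Λ > 0, d > 0, and let φ : [0,d] → ℝ be a function with φ(t) > 0 for all t ∈ [0,d] which is Lipschitz with constant Λ, i.e. |φ(s) − φ(t)| ≤ Λ|s − t| for all s, t ∈ [0,d]. Then ∫₀^d φ(t)⁻¹ dt ≥ Λ⁻¹ · ln(1 + Λ d / min(φ(0), φ(d))). -/
lemma aux_integral (Λ d a : ℝ) (hΛ : 0 < Λ) (hd : 0 < d) (ha : 0 < a) :
    ∫ t in (0:ℝ)..d, (a + Λ * t)⁻¹ = Λ⁻¹ * Real.log (1 + Λ * d / a) := by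
  have h0 : (∫ t in (0:ℝ)..d, (a + Λ * t)⁻¹)
      = ∫ t in (0:ℝ)..d, (fun x : ℝ => x⁻¹) (Λ * t + a) := by
    congr 1; funext t; ring_nf
  rw [h0, intervalIntegral.integral_comp_mul_add (fun x : ℝ => x⁻¹) hΛ.ne' a]
  have hmem : (0:ℝ) ∉ Set.uIcc (Λ * 0 + a) (Λ * d + a) := by
    rw [Set.mem_uIcc]
    push_neg
    constructor <;> intro h <;> nlinarith
  rw [integral_inv hmem]
  have : (Λ * d + a) / (Λ * 0 + a) = 1 + Λ * d / a := by
    field_simp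
    ring
  rw [this, smul_eq_mul]

/-- Two-endpoint form of the length estimate of Lemma 3.2: a positive `Λ`-Lipschitz
function `φ` on `[0,d]` satisfies `∫₀^d φ⁻¹ ≥ Λ⁻¹ · log(1 + Λd/min(φ(0),φ(d)))`. -/
theorem stmt_5 (Λ d : ℝ) (hΛ : 0 < Λ) (hd : 0 < d) (φ : ℝ → ℝ)
    (hpos : ∀ t ∈ Set.Icc (0:ℝ) d, 0 < φ t)
    (hlip : ∀ s ∈ Set.Icc (0:ℝ) d, ∀ t ∈ Set.Icc (0:ℝ) d,
      |φ s - φ t| ≤ Λ * |s - t|) :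
    Λ⁻¹ * Real.log (1 + Λ * d / min (φ 0) (φ d)) ≤ ∫ t in (0:ℝ)..d, (φ t)⁻¹ := by
  have h0d : (0:ℝ) ∈ Set.Icc (0:ℝ) d := ⟨le_refl _, hd.le⟩
  have hdd : d ∈ Set.Icc (0:ℝ) d := ⟨hd.le, le_refl _⟩
  -- continuity of φ on [0,d]
  have hcont : ContinuousOn φ (Set.Icc 0 d) := by
    have : LipschitzOnWith Λ.toNNReal φ (Set.Icc 0 d) := by
      rw [lipschitzOnWith_iff_dist_le_mul]
      intro x hx y hy
      simpa [Real.dist_eq, Real.coe_toNNReal _ hΛ.le] using hlip x hx y hy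
    exact this.continuousOn
  have hcontinv : ContinuousOn (fun t => (φ t)⁻¹) (Set.Icc 0 d) :=
    hcont.inv₀ fun t ht => (hpos t ht).ne'
  have hint : IntervalIntegrable (fun t => (φ t)⁻¹) MeasureTheory.volume 0 d := by
    apply ContinuousOn.intervalIntegrable
    rwa [Set.uIcc_of_le hd.le]
  rcases min_cases (φ 0) (φ d) with ⟨hmin, _⟩ | ⟨hmin, _⟩
  · -- min = φ 0
    rw [hmin]
    have hle : ∀ t ∈ Set.Icc (0:ℝ) d, (φ 0 + Λ * t)⁻¹ ≤ (φ t)⁻¹ := by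
      intro t ht
      have h2 := (abs_le.1 (hlip t ht 0 h0d)).2
      rw [sub_zero, abs_of_nonneg ht.1] at h2
      have hφt' : φ t ≤ φ 0 + Λ * t := by linarith
      exact inv_anti₀ (hpos t ht) hφt'
    calc Λ⁻¹ * Real.log (1 + Λ * d / φ 0)
        = ∫ t in (0:ℝ)..d, (φ 0 + Λ * t)⁻¹ :=
          (aux_integral Λ d (φ 0) hΛ hd (hpos 0 h0d)).symm
      _ ≤ ∫ t in (0:ℝ)..d, (φ t)⁻¹ := by
          apply intervalIntegral.integral_mono_on hd.le _ hint hle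
          apply ContinuousOn.intervalIntegrable
          apply ContinuousOn.inv₀
          · fun_prop
          · intro t ht
            rw [Set.uIcc_of_le hd.le] at ht
            nlinarith [hpos 0 h0d, ht.1]
  · -- min = φ d
    rw [hmin]
    have hle : ∀ t ∈ Set.Icc (0:ℝ) d, (φ d + Λ * (d - t))⁻¹ ≤ (φ t)⁻¹ := by
      intro t ht
      have := (abs_le.1 (hlip t ht d hdd)).2
      rw [show |t - d| = d - t from by
        rw [abs_sub_comm]; exact abs_of_nonneg (by linarith [ht.2])] at this
      have hφt' : φ t ≤ φ d + Λ * (d - t) := by linarith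
      exact inv_anti₀ (hpos t ht) hφt'
    have hsub : (∫ t in (0:ℝ)..d, (φ d + Λ * (d - t))⁻¹)
        = ∫ t in (0:ℝ)..d, (φ d + Λ * t)⁻¹ := by
      have := intervalIntegral.integral_comp_sub_left
        (a := (0:ℝ)) (b := d) (fun s => (φ d + Λ * s)⁻¹) d
      simpa using this
    calc Λ⁻¹ * Real.log (1 + Λ * d / φ d)
        = ∫ t in (0:ℝ)..d, (φ d + Λ * (d - t))⁻¹ := by
          rw [hsub]; exact (aux_integral Λ d (φ d) hΛ hd (hpos d hdd)).symm
      _ ≤ ∫ t in (0:ℝ)..d, (φ t)⁻¹ := by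
          apply intervalIntegral.integral_mono_on hd.le _ hint hle
          apply ContinuousOn.intervalIntegrable
          apply ContinuousOn.inv₀
          · fun_prop
          · intro t ht
            rw [Set.uIcc_of_le hd.le] at ht
            nlinarith [hpos d hdd, ht.2]
end

section
/- Let μ be a Borel measure on ℝ² with μ({y : |y| ≤ r}) ≤ C·r² for all r > 0 and some constant C > 0, and let Q : ℝ² → ℝ be μ-integrable. For each integer m ≥ 1 define η_m : ℝ² → ℝ by η_m(y) = 1 if |y| ≤ e^m, η_m(y) = 2 − (ln|y|)/m if e^m ≤ |y| ≤ e^{2m}, and η_m(y) = 0 if |y| ≥ e^{2m}. Suppose there is a constant C₂ > 0 such that for every m ≥ 1, ∫_{ℝ²} Q·η_m² dμ ≤ (C₂/m²)·∫_{{y : e^m ≤ |y| ≤ e^{2m}}} |y|^{−2} dμ. Then ∫_{ℝ²} Q dμ ≤ 0. -/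
open MeasureTheory Real Filter Topology

/-- The logarithmic cut-off function `η_m` of the proof of Theorem 4.2. -/
noncomputable def logCutoff (m : ℕ) (y : EuclideanSpace ℝ (Fin 2)) : ℝ :=
  if ‖y‖ ≤ Real.exp m then 1
  else if ‖y‖ ≤ Real.exp (2 * m) then 2 - Real.log ‖y‖ / m
  else 0

lemma shell_bound (μ : Measure (EuclideanSpace ℝ (Fin 2))) (C : ℝ)
    (hμ : ∀ r > (0:ℝ), μ {y : EuclideanSpace ℝ (Fin 2) | ‖y‖ ≤ r} ≤ ENNReal.ofReal (C * r ^ 2))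
    (a : ℝ) :
    ∫⁻ y in {y : EuclideanSpace ℝ (Fin 2) | Real.exp a ≤ ‖y‖ ∧ ‖y‖ ≤ Real.exp (a+1)},
      ENNReal.ofReal (‖y‖ ^ (-2:ℝ)) ∂μ ≤ ENNReal.ofReal (C * Real.exp 2) := by
  have hs : MeasurableSet {y : EuclideanSpace ℝ (Fin 2) | Real.exp a ≤ ‖y‖ ∧ ‖y‖ ≤ Real.exp (a+1)} := by
    apply MeasurableSet.inter
    · exact measurableSet_le measurable_const measurable_norm
    · exact measurableSet_le measurable_norm measurable_const
  calc ∫⁻ y in {y : EuclideanSpace ℝ (Fin 2) | Real.exp a ≤ ‖y‖ ∧ ‖y‖ ≤ Real.exp (a+1)},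
      ENNReal.ofReal (‖y‖ ^ (-2:ℝ)) ∂μ
      ≤ ∫⁻ _ in {y : EuclideanSpace ℝ (Fin 2) | Real.exp a ≤ ‖y‖ ∧ ‖y‖ ≤ Real.exp (a+1)},
        ENNReal.ofReal (Real.exp a ^ (-2:ℝ)) ∂μ := by
        apply setLIntegral_mono' hs
        intro y hy
        apply ENNReal.ofReal_le_ofReal
        exact Real.rpow_le_rpow_of_nonpos (Real.exp_pos a) hy.1 (by norm_num)
    _ = ENNReal.ofReal (Real.exp a ^ (-2:ℝ)) * μ {y : EuclideanSpace ℝ (Fin 2) | Real.exp a ≤ ‖y‖ ∧ ‖y‖ ≤ Real.exp (a+1)} := setLIntegral_const _ _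
    _ ≤ ENNReal.ofReal (Real.exp a ^ (-2:ℝ)) * ENNReal.ofReal (C * Real.exp (a+1) ^ 2) := by
      gcongr
      refine le_trans (measure_mono ?_) (hμ (Real.exp (a+1)) (Real.exp_pos _))
      intro y hy; exact hy.2
    _ ≤ ENNReal.ofReal (C * Real.exp 2) := by
      rw [← ENNReal.ofReal_mul (by positivity)]
      apply ENNReal.ofReal_le_ofReal
      rw [← Real.exp_mul, ← Real.exp_nat_mul, ← mul_assoc, mul_comm (Real.exp (a * (-2))),
        mul_assoc, ← Real.exp_add]
      norm_num [mul_add]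
      ring_nf
      exact le_refl _

lemma annulus_cover (m : ℕ) (hm : 1 ≤ m) (y : EuclideanSpace ℝ (Fin 2))
    (hy : Real.exp m ≤ ‖y‖ ∧ ‖y‖ ≤ Real.exp (2 * m)) :
    ∃ k : Fin m, Real.exp ((m + k : ℕ) : ℝ) ≤ ‖y‖ ∧ ‖y‖ ≤ Real.exp (((m + k : ℕ) : ℝ) + 1) := by
  set t := Real.log ‖y‖ with ht
  have hpos : (0:ℝ) < ‖y‖ := lt_of_lt_of_le (Real.exp_pos _) hy.1
  have hyt : ‖y‖ = Real.exp t := (Real.exp_log hpos).symm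
  have h1 : (m:ℝ) ≤ t := by
    have := hy.1; rw [hyt, Real.exp_le_exp] at this; exact this
  have h2 : t ≤ 2 * m := by
    have := hy.2; rw [hyt, Real.exp_le_exp] at this; exact this
  have htm : (0:ℝ) ≤ t - m := by linarith
  set k0 := ⌊t - (m:ℝ)⌋₊ with hk0
  set k := min k0 (m - 1) with hk
  have hkm : k < m := lt_of_le_of_lt (min_le_right _ _) (by omega)
  refine ⟨⟨k, hkm⟩, ?_, ?_⟩
  · rw [hyt, Real.exp_le_exp]
    push_cast [hkm.le]
    have : (k:ℝ) ≤ k0 := by exact_mod_cast min_le_left _ _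
    have h3 : (k0:ℝ) ≤ t - m := Nat.floor_le htm
    linarith
  · rw [hyt, Real.exp_le_exp]
    push_cast [hkm.le]
    rcases le_or_gt k0 (m-1) with h | h
    · have : k = k0 := min_eq_left h
      have h4 : t - m < k0 + 1 := Nat.lt_floor_add_one _
      rw [this]; linarith
    · have hke : k = m - 1 := min_eq_right h.le
      have : ((m:ℝ) - 1) ≤ (k:ℝ) := by
        rw [hke]; push_cast [hm]; linarith
      linarith

lemma annulus_bound (μ : Measure (EuclideanSpace ℝ (Fin 2))) (C : ℝ) (hC : 0 ≤ C)
    (hμ : ∀ r > (0:ℝ), μ {y : EuclideanSpace ℝ (Fin 2) | ‖y‖ ≤ r} ≤ ENNReal.ofReal (C * r ^ 2))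
    (m : ℕ) (hm : 1 ≤ m) :
    (∫ y in {y : EuclideanSpace ℝ (Fin 2) |
        Real.exp m ≤ ‖y‖ ∧ ‖y‖ ≤ Real.exp (2 * m)}, ‖y‖ ^ (-2 : ℝ) ∂μ)
      ≤ C * Real.exp 2 * m := by
  set s := {y : EuclideanSpace ℝ (Fin 2) | Real.exp m ≤ ‖y‖ ∧ ‖y‖ ≤ Real.exp (2 * m)}
  have hmeas : AEStronglyMeasurable (fun y : EuclideanSpace ℝ (Fin 2) => ‖y‖ ^ (-2:ℝ))
      (μ.restrict s) := (by fun_prop : Measurable fun y : EuclideanSpace ℝ (Fin 2) => ‖y‖ ^ (-2:ℝ)).aestronglyMeasurable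
  rw [integral_eq_lintegral_of_nonneg_ae
    (Filter.Eventually.of_forall fun y => Real.rpow_nonneg (norm_nonneg y) _) hmeas]
  apply ENNReal.toReal_le_of_le_ofReal (by positivity)
  calc ∫⁻ y in s, ENNReal.ofReal (‖y‖ ^ (-2:ℝ)) ∂μ
      ≤ ∫⁻ y in ⋃ k : Fin m, {y : EuclideanSpace ℝ (Fin 2) |
          Real.exp ((m + k : ℕ) : ℝ) ≤ ‖y‖ ∧ ‖y‖ ≤ Real.exp (((m + k : ℕ) : ℝ) + 1)},
        ENNReal.ofReal (‖y‖ ^ (-2:ℝ)) ∂μ := by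
        apply lintegral_mono_set
        intro y hy
        obtain ⟨k, hk⟩ := annulus_cover m hm y hy
        exact Set.mem_iUnion.mpr ⟨k, hk⟩
    _ ≤ ∑' k : Fin m, ∫⁻ y in {y : EuclideanSpace ℝ (Fin 2) |
          Real.exp ((m + k : ℕ) : ℝ) ≤ ‖y‖ ∧ ‖y‖ ≤ Real.exp (((m + k : ℕ) : ℝ) + 1)},
        ENNReal.ofReal (‖y‖ ^ (-2:ℝ)) ∂μ := lintegral_iUnion_le _ _
    _ ≤ ∑' _ : Fin m, ENNReal.ofReal (C * Real.exp 2) := by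
        apply ENNReal.tsum_le_tsum
        intro k
        exact shell_bound μ C hμ _
    _ = (m : ENNReal) * ENNReal.ofReal (C * Real.exp 2) := by
        rw [tsum_fintype]
        simp [Finset.sum_const, nsmul_eq_mul]
    _ ≤ ENNReal.ofReal (C * Real.exp 2 * m) := by
        rw [← ENNReal.ofReal_natCast m, ← ENNReal.ofReal_mul (by positivity)]
        apply ENNReal.ofReal_le_ofReal
        rw [mul_comm]

lemma logCutoff_mem (m : ℕ) (y : EuclideanSpace ℝ (Fin 2)) :
    0 ≤ logCutoff m y ∧ logCutoff m y ≤ 1 := by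
  unfold logCutoff
  split_ifs with h1 h2
  · norm_num
  · rcases Nat.eq_zero_or_pos m with rfl | hm
    · exfalso; apply h1; simpa using h2
    · have hpos : (0:ℝ) < ‖y‖ := lt_trans (Real.exp_pos _) (lt_of_not_ge h1)
      have hml : (m:ℝ) < Real.log ‖y‖ := by
        rw [← Real.log_exp (m:ℝ)]
        exact Real.log_lt_log (Real.exp_pos _) (lt_of_not_ge h1)
      have hmu : Real.log ‖y‖ ≤ 2 * m := by
        rw [← Real.log_exp (2 * (m:ℝ))]
        · exact_mod_cast Real.log_le_log hpos (by exact_mod_cast h2)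
      have hm' : (0:ℝ) < m := by exact_mod_cast hm
      constructor
      · have : Real.log ‖y‖ / m ≤ 2 := by
          rw [div_le_iff₀ hm']; linarith
        linarith
      · have : 1 < Real.log ‖y‖ / m := by
          rw [lt_div_iff₀ hm']; linarith
        linarith
  · norm_num

lemma logCutoff_measurable (m : ℕ) : Measurable (logCutoff m) := by
  unfold logCutoff
  apply Measurable.ite (measurableSet_le measurable_norm measurable_const) measurable_const
  apply Measurable.ite (measurableSet_le measurable_norm measurable_const) _ measurable_const
  exact measurable_const.sub ((Real.measurable_log.comp measurable_norm).div_const _)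

/-- Logarithmic cut-off argument in the proof of Theorem 4.2: if `μ` has quadratic
growth, `Q` is `μ`-integrable, and `∫ Q η_m² dμ ≤ (C₂/m²)∫_{annulus} |y|⁻² dμ` for
every `m ≥ 1`, then `∫ Q dμ ≤ 0`. -/
theorem stmt_10 (μ : Measure (EuclideanSpace ℝ (Fin 2)))
    (C C₂ : ℝ) (hC : 0 < C) (hC₂ : 0 < C₂)
    (hμ : ∀ r > (0:ℝ), μ {y : EuclideanSpace ℝ (Fin 2) | ‖y‖ ≤ r}
      ≤ ENNReal.ofReal (C * r ^ 2))
    (Q : EuclideanSpace ℝ (Fin 2) → ℝ) (hQ : Integrable Q μ)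
    (hineq : ∀ m : ℕ, 1 ≤ m →
      (∫ y, Q y * (logCutoff m y) ^ 2 ∂μ)
        ≤ (C₂ / (m : ℝ) ^ 2) *
          (∫ y in {y : EuclideanSpace ℝ (Fin 2) |
              Real.exp m ≤ ‖y‖ ∧ ‖y‖ ≤ Real.exp (2 * m)}, ‖y‖ ^ (-2 : ℝ) ∂μ)) :
    (∫ y, Q y ∂μ) ≤ 0 := by
  -- upper bound on RHS
  have key : ∀ m : ℕ, 1 ≤ m →
      (∫ y, Q y * (logCutoff m y) ^ 2 ∂μ) ≤ C₂ * (C * Real.exp 2) / m := by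
    intro m hm
    refine le_trans (hineq m hm) ?_
    have hm' : (0:ℝ) < m := by exact_mod_cast hm
    have h1 := annulus_bound μ C hC.le hμ m hm
    calc (C₂ / (m : ℝ) ^ 2) * _ ≤ (C₂ / (m : ℝ) ^ 2) * (C * Real.exp 2 * m) := by
          apply mul_le_mul_of_nonneg_left h1 (by positivity)
      _ = C₂ * (C * Real.exp 2) / m := by field_simp
  -- convergence of LHS
  have hlim1 : Tendsto (fun m : ℕ => ∫ y, Q y * (logCutoff m y) ^ 2 ∂μ) atTop
      (𝓝 (∫ y, Q y ∂μ)) := by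
    apply tendsto_integral_of_dominated_convergence (fun y => |Q y|)
    · intro m
      exact hQ.aestronglyMeasurable.mul
        (((logCutoff_measurable m).pow_const 2).aestronglyMeasurable)
    · exact hQ.abs
    · intro m
      apply Filter.Eventually.of_forall
      intro y
      obtain ⟨h0, h1⟩ := logCutoff_mem m y
      rw [Real.norm_eq_abs, abs_mul]
      have : |logCutoff m y ^ 2| ≤ 1 := by
        rw [abs_of_nonneg (by positivity)]
        nlinarith
      nlinarith [abs_nonneg (Q y)]
    · apply Filter.Eventually.of_forall
      intro y
      have : ∀ᶠ m : ℕ in atTop, Q y * (logCutoff m y) ^ 2 = Q y := by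
        filter_upwards [Filter.eventually_ge_atTop ⌈‖y‖⌉₊] with m hm
        have h1 : ‖y‖ ≤ Real.exp m := by
          calc ‖y‖ ≤ (⌈‖y‖⌉₊ : ℝ) := Nat.le_ceil _
            _ ≤ (m : ℝ) := by exact_mod_cast hm
            _ ≤ Real.exp m := by
                have := Real.add_one_le_exp (m:ℝ); linarith
        simp [logCutoff, h1]
      exact Tendsto.congr' (Filter.EventuallyEq.symm this) tendsto_const_nhds
  -- limit of upper bound
  have hlim2 : Tendsto (fun m : ℕ => C₂ * (C * Real.exp 2) / m) atTop (𝓝 0) :=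
    tendsto_const_div_atTop_nhds_zero_nat _
  refine le_of_tendsto_of_tendsto hlim1 hlim2 ?_
  filter_upwards [Filter.eventually_ge_atTop 1] with m hm
  exact key m hm
end
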